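/- For the 2D forward-backward discrete Dirac symbol, G₀ₕᶠᵇ(ξ)² = g₀ₕᶠᵇ(ξ)·I where g₀ₕᶠᵇ(ξ) = m² + (4/h²)sin²(hξ₁/2) + (4/h²)sin²(hξ₂/2) + (2/h²)[sin(h(ξ₁-ξ₂)) - sin(hξ₁) + sin(hξ₂)]. -/

import Mathlib

set_option maxHeartbeats 1000000

open Complex in
private lemma keyAB' (h A B C D : ℂ) (hh : h ≠ 0) (hAC : A * C = 1) (hBD : B * D = 1) :
    ((1 / (I * h)) * (A - 1) + (1 / h) * (B - 1)) *
      (-(1 / (I * h)) * (C - 1) + (1 / h) * (D - 1))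
    = 2 / h ^ 2 * (2 - (A + C) / 2 - (B + D) / 2
        + (C * B - A * D) * I / 2 - (C - A) * I / 2 + (D - B) * I / 2) := by
  have hI : (I : ℂ) ≠ 0 := Complex.I_ne_zero
  field_simp
  ring_nf
  linear_combination (-1) * hAC + (I^2) * hBD +
    (-2 - D*I + C + C*I + B*I - B*C*I
      + A - A*I + A*D*I) * Complex.I_sq

open Complex in
private lemma entry' (h ξ₁ ξ₂ : ℝ) (hh : h ≠ 0) :
    ((1 / (I * (h:ℂ))) * (exp (I * h * ξ₁) - 1) + (1 / (h:ℂ)) * (exp (I * h * ξ₂) - 1)) *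
      (-(1 / (I * (h:ℂ))) * (exp (-I * h * ξ₁) - 1) + (1 / (h:ℂ)) * (exp (-I * h * ξ₂) - 1))
    = ((4 / h ^ 2 * Real.sin (h * ξ₁ / 2) ^ 2 + 4 / h ^ 2 * Real.sin (h * ξ₂ / 2) ^ 2
        + 2 / h ^ 2 * (Real.sin (h * (ξ₁ - ξ₂)) - Real.sin (h * ξ₁) + Real.sin (h * ξ₂)) : ℝ) : ℂ) := by
  have hhc : (h : ℂ) ≠ 0 := by exact_mod_cast hh
  set A := exp (I * h * ξ₁) with hA
  set B := exp (I * h * ξ₂) with hB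
  set C := exp (-I * h * ξ₁) with hC
  set D := exp (-I * h * ξ₂) with hD
  have hAC : A * C = 1 := by
    rw [hA, hC, ← Complex.exp_add, show I * (h:ℂ) * ξ₁ + -I * h * ξ₁ = 0 by ring, Complex.exp_zero]
  have hBD : B * D = 1 := by
    rw [hB, hD, ← Complex.exp_add, show I * (h:ℂ) * ξ₂ + -I * h * ξ₂ = 0 by ring, Complex.exp_zero]
  rw [keyAB' (h:ℂ) A B C D hhc hAC hBD]
  -- convert the real RHS
  have s1 : Real.sin (h * ξ₁ / 2) ^ 2 = 1 / 2 - Real.cos (h * ξ₁) / 2 := by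
    rw [Real.sin_sq_eq_half_sub, show 2 * (h * ξ₁ / 2) = h * ξ₁ by ring]
  have s2 : Real.sin (h * ξ₂ / 2) ^ 2 = 1 / 2 - Real.cos (h * ξ₂) / 2 := by
    rw [Real.sin_sq_eq_half_sub, show 2 * (h * ξ₂ / 2) = h * ξ₂ by ring]
  rw [s1, s2]
  have hcos1 : Complex.cos ((h:ℂ) * ξ₁) = (A + C) / 2 := by
    rw [Complex.cos, hA, hC]; ring_nf
  have hcos2 : Complex.cos ((h:ℂ) * ξ₂) = (B + D) / 2 := by
    rw [Complex.cos, hB, hD]; ring_nf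
  have hsin1 : Complex.sin ((h:ℂ) * ξ₁) = (C - A) * I / 2 := by
    rw [Complex.sin, hA, hC]; ring_nf
  have hsin2 : Complex.sin ((h:ℂ) * ξ₂) = (D - B) * I / 2 := by
    rw [Complex.sin, hB, hD]; ring_nf
  have hsin12 : Complex.sin ((h:ℂ) * ((ξ₁:ℂ) - ξ₂)) = (C * B - A * D) * I / 2 := by
    rw [Complex.sin, hA, hB, hC, hD, ← Complex.exp_add, ← Complex.exp_add]
    ring_nf
  push_cast
  rw [hcos1, hcos2, hsin1, hsin2, hsin12]
  ring

noncomputable def G0fb2 (h m ξ₁ ξ₂ : ℝ) : Matrix (Fin 2) (Fin 2) ℂ :=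
  !![(m : ℂ),
     -(1 / (Complex.I * h)) * (Complex.exp (-(Complex.I) * h * ξ₁) - 1)
       + (1 / (h : ℂ)) * (Complex.exp (-(Complex.I) * h * ξ₂) - 1);
     (1 / (Complex.I * h)) * (Complex.exp (Complex.I * h * ξ₁) - 1)
       + (1 / (h : ℂ)) * (Complex.exp (Complex.I * h * ξ₂) - 1),
     (-m : ℂ)]

noncomputable def g0fb2 (h m ξ₁ ξ₂ : ℝ) : ℝ :=
  m ^ 2 + 4 / h ^ 2 * Real.sin (h * ξ₁ / 2) ^ 2 + 4 / h ^ 2 * Real.sin (h * ξ₂ / 2) ^ 2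
    + 2 / h ^ 2 * (Real.sin (h * (ξ₁ - ξ₂)) - Real.sin (h * ξ₁) + Real.sin (h * ξ₂))

private lemma sq2 (m b c : ℂ) :
    (!![m, b; c, -m] : Matrix (Fin 2) (Fin 2) ℂ) ^ 2 = (m * m + b * c) • 1 := by
  ext i j
  fin_cases i <;> fin_cases j <;>
    simp [pow_two, Matrix.mul_apply, Fin.sum_univ_two, Matrix.one_apply] <;> ring

theorem G0fb2_sq (h m ξ₁ ξ₂ : ℝ) (hh : 0 < h) (hm : 0 ≤ m) :
    (G0fb2 h m ξ₁ ξ₂) ^ 2 =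
      ((g0fb2 h m ξ₁ ξ₂ : ℝ) : ℂ) • (1 : Matrix (Fin 2) (Fin 2) ℂ) := by
  have key := entry' h ξ₁ ξ₂ hh.ne'
  rw [show G0fb2 h m ξ₁ ξ₂ =
      !![(m : ℂ),
         -(1 / (Complex.I * h)) * (Complex.exp (-(Complex.I) * h * ξ₁) - 1)
           + (1 / (h : ℂ)) * (Complex.exp (-(Complex.I) * h * ξ₂) - 1);
         (1 / (Complex.I * h)) * (Complex.exp (Complex.I * h * ξ₁) - 1)
           + (1 / (h : ℂ)) * (Complex.exp (Complex.I * h * ξ₂) - 1),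
         -(m : ℂ)] from rfl, sq2]
  congr 1
  have hg : ((g0fb2 h m ξ₁ ξ₂ : ℝ) : ℂ) = ((m : ℂ)) ^ 2
      + ((4 / h ^ 2 * Real.sin (h * ξ₁ / 2) ^ 2 + 4 / h ^ 2 * Real.sin (h * ξ₂ / 2) ^ 2
        + 2 / h ^ 2 * (Real.sin (h * (ξ₁ - ξ₂)) - Real.sin (h * ξ₁) + Real.sin (h * ξ₂)) : ℝ) : ℂ) := by
    rw [g0fb2]; push_cast; ring
  rw [hg]
  linear_combination key
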